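/- Let φ : ℝ → ℝ be a C², 2π-periodic function with φ(t+π) = −φ(t) for all t, let α = 3/2, and fix ε ∈ ℝ, θ ∈ ℝ, λ ∈ ℂ. Suppose U, W : ℝ → ℂ are 2π-periodic C² functions such that the pair (u,w) = (U(t)e^{λt}, W(t)e^{λt}) satisfies the linearized system with parameter π−θ: ü + (α/(1+ε²))|φ(t)|^{α−1}u = (ε/(1+ε²))(V''(−φ(t)) + V''(φ(t))e^{−2i(π−θ)})w and ẅ + (αε²/(1+ε²))|φ(t)|^{α−1}w = (ε/(1+ε²))(V''(−φ(t)) + V''(φ(t))e^{2i(π−θ)})u. Then the pair (ũ,w̃) = (U(t+π)e^{λt}, e^{2iθ}W(t+π)e^{λt}) satisfies the same linearized system with parameter θ in place of π−θ. In particular, the characteristic exponents of the linearized problem at the uniform periodic oscillation (q = 0) for parameters θ and π−θ coincide. -/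

import Mathlib

open Real

/-- Second derivative of the Hertzian potential: `V''(x) = (3/2)(max(-x,0))^(1/2)`. -/
noncomputable def V'' (x : ℝ) : ℝ := (3/2) * (max (-x) 0) ^ ((1:ℝ)/2)

/-- The linearized system at the uniform periodic oscillation (`q = 0`) of the dimer
chain, with Bloch parameter `θ`, for the pair of complex-valued functions `(u, w)`;
here `α = 3/2`, so `α - 1 = 1/2`. -/
def LinSys (ε θ : ℝ) (φ : ℝ → ℝ) (u w : ℝ → ℂ) : Prop :=
  (∀ t : ℝ, deriv (deriv u) t
      + ((((3:ℝ)/2) / (1 + ε ^ 2) * |φ t| ^ ((1:ℝ)/2) : ℝ) : ℂ) * u t =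
    ((ε / (1 + ε ^ 2) : ℝ) : ℂ)
      * ((V'' (-φ t) : ℂ) + (V'' (φ t) : ℂ) * Complex.exp (-2 * Complex.I * (θ:ℂ)))
      * w t) ∧
  (∀ t : ℝ, deriv (deriv w) t
      + ((((3:ℝ)/2) * ε ^ 2 / (1 + ε ^ 2) * |φ t| ^ ((1:ℝ)/2) : ℝ) : ℂ) * w t =
    ((ε / (1 + ε ^ 2) : ℝ) : ℂ)
      * ((V'' (-φ t) : ℂ) + (V'' (φ t) : ℂ) * Complex.exp (2 * Complex.I * (θ:ℂ)))
      * u t)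

lemma second_deriv_const_mul_shift (h : ℝ → ℂ) (hh : ContDiff ℝ 2 h) (c : ℂ) (a t : ℝ) :
    deriv (deriv (fun s => c * h (s + a))) t = c * deriv (deriv h) (t + a) := by
  have hdh : ContDiff ℝ 1 (deriv h) := by
    have h2 : ContDiff ℝ ((1:ℕ) + 1 : ℕ) h := hh
    exact (contDiff_succ_iff_deriv.mp h2).2.2
  have h1 : (deriv (fun s => c * h (s + a))) = fun s => c * deriv h (s + a) := by
    funext s
    have d1 : DifferentiableAt ℝ (fun s : ℝ => h (s + a)) s :=
      ((hh.differentiable two_ne_zero).comp (differentiable_id.add_const a)) s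
    rw [deriv_const_mul _ d1, deriv_comp_add_const]
  have d2 : DifferentiableAt ℝ (fun s : ℝ => deriv h (s + a)) t :=
    ((hdh.differentiable one_ne_zero).comp (differentiable_id.add_const a)) t
  rw [h1, deriv_const_mul _ d2, deriv_comp_add_const]

lemma contDiff_cexp_lam_mul (lam : ℂ) :
    ContDiff ℝ 2 (fun s : ℝ => Complex.exp (lam * (s:ℂ))) :=
  (Complex.contDiff_exp (𝕜 := ℝ)).comp (contDiff_const.mul Complex.ofRealCLM.contDiff)

/-- Hidden symmetry of the linearized problem at the uniform oscillation (`q = 0`):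
a Floquet solution for the Bloch parameter `π - θ` is mapped to a Floquet solution
(with the same exponent `λ`) for the Bloch parameter `θ`. -/
theorem hidden_symmetry_q_zero
    (φ : ℝ → ℝ) (hφ : ContDiff ℝ 2 φ)
    (hφper : Function.Periodic φ (2 * π))
    (hanti : ∀ t, φ (t + π) = -φ t)
    (ε θ : ℝ) (lam : ℂ) (U W : ℝ → ℂ)
    (hU : ContDiff ℝ 2 U) (hW : ContDiff ℝ 2 W)
    (hUper : Function.Periodic U (2 * π)) (hWper : Function.Periodic W (2 * π))
    (h : LinSys ε (π - θ) φ
      (fun t => U t * Complex.exp (lam * (t:ℂ)))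
      (fun t => W t * Complex.exp (lam * (t:ℂ)))) :
    LinSys ε θ φ
      (fun t => U (t + π) * Complex.exp (lam * (t:ℂ)))
      (fun t => Complex.exp (2 * Complex.I * (θ:ℂ)) * W (t + π)
        * Complex.exp (lam * (t:ℂ))) := by
  obtain ⟨h1, h2⟩ := h
  set f : ℝ → ℂ := fun t => U t * Complex.exp (lam * (t:ℂ)) with hf
  set g : ℝ → ℂ := fun t => W t * Complex.exp (lam * (t:ℂ)) with hg
  have hfC : ContDiff ℝ 2 f := hU.mul (contDiff_cexp_lam_mul lam)
  have hgC : ContDiff ℝ 2 g := hW.mul (contDiff_cexp_lam_mul lam)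
  have hPexp : ∀ t : ℝ, Complex.exp (lam * ((t + π : ℝ) : ℂ))
      = Complex.exp (lam * (t:ℂ)) * Complex.exp (lam * (π:ℂ)) := by
    intro t
    rw [← Complex.exp_add]; push_cast; ring_nf
  -- rewrite ũ as const * shift of f
  have hufun : (fun t : ℝ => U (t + π) * Complex.exp (lam * (t:ℂ)))
      = fun t : ℝ => Complex.exp (-(lam * (π:ℂ))) * f (t + π) := by
    funext t
    simp only [hf, hPexp t, Complex.exp_neg]
    field_simp
  have hwfun : (fun t : ℝ => Complex.exp (2 * Complex.I * (θ:ℂ)) * W (t + π)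
        * Complex.exp (lam * (t:ℂ)))
      = fun t : ℝ => (Complex.exp (2 * Complex.I * (θ:ℂ)) * Complex.exp (-(lam * (π:ℂ)))) * g (t + π) := by
    funext t
    simp only [hg, hPexp t, Complex.exp_neg]
    field_simp
  -- exponential identities
  have e1 : Complex.exp (-2 * Complex.I * ((π - θ : ℝ) : ℂ))
      = Complex.exp (2 * Complex.I * (θ:ℂ)) := by
    rw [show (-2 * Complex.I * ((π - θ : ℝ) : ℂ))
        = 2 * Complex.I * (θ:ℂ) + (-(2 * (π:ℂ) * Complex.I)) by push_cast; ring,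
      Complex.exp_add, Complex.exp_neg, Complex.exp_two_pi_mul_I, inv_one, mul_one]
  have e2 : Complex.exp (2 * Complex.I * ((π - θ : ℝ) : ℂ))
      = Complex.exp (-2 * Complex.I * (θ:ℂ)) := by
    rw [show (2 * Complex.I * ((π - θ : ℝ) : ℂ))
        = -2 * Complex.I * (θ:ℂ) + (2 * (π:ℂ) * Complex.I) by push_cast; ring,
      Complex.exp_add, Complex.exp_two_pi_mul_I, mul_one]
  have eθ : Complex.exp (-2 * Complex.I * (θ:ℂ)) * Complex.exp (2 * Complex.I * (θ:ℂ)) = 1 := by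
    rw [← Complex.exp_add]; ring_nf; exact Complex.exp_zero
  constructor
  · intro t
    rw [hufun, hwfun, second_deriv_const_mul_shift f hfC _ π t]
    have h1' := h1 (t + π)
    rw [hanti t, abs_neg, neg_neg, e1] at h1'
    simp only [hf, hg] at h1' ⊢
    linear_combination (Complex.exp (-(lam * (π:ℂ)))) * h1'
      - ((ε / (1 + ε ^ 2) : ℝ) : ℂ) * (V'' (φ t) : ℂ) * Complex.exp (-(lam * (π:ℂ)))
        * (W (t + π) * Complex.exp (lam * ((t + π : ℝ) : ℂ))) * eθ
  · intro t
    rw [hufun, hwfun, second_deriv_const_mul_shift g hgC _ π t]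
    have h2' := h2 (t + π)
    rw [hanti t, abs_neg, neg_neg, e2] at h2'
    simp only [hf, hg] at h2' ⊢
    linear_combination (Complex.exp (2 * Complex.I * (θ:ℂ)) * Complex.exp (-(lam * (π:ℂ)))) * h2'
      + ((ε / (1 + ε ^ 2) : ℝ) : ℂ) * (V'' (-φ t) : ℂ) * Complex.exp (-(lam * (π:ℂ)))
        * (U (t + π) * Complex.exp (lam * ((t + π : ℝ) : ℂ))) * eθ
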